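/- For every natural number n ≥ 3, 41 times the n-th power of the 3×3 matrix H = [[1,1,1],[1,0,0],[0,1,0]] (over the integers) equals the 3×3 matrix with first row (10H_{n+1} + 16H_n + 7H_{n-1}, 10H_n + 26H_{n-1} + 23H_{n-2} + 7H_{n-3}, 10H_n + 16H_{n-1} + 7H_{n-2}), second row (7H_{n+1} + 3H_n + 9H_{n-1}, 7H_n + 10H_{n-1} + 12H_{n-2} + 9H_{n-3}, 7H_n + 3H_{n-1} + 9H_{n-2}), and third row (9H_{n+1} - 2H_n - 6H_{n-1}, 9H_n + 7H_{n-1} - 8H_{n-2} - 6H_{n-3}, 9H_n - 2H_{n-1} - 6H_{n-2}). -/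

import Mathlib

/-- The generalized Tribonacci sequence. -/
def genTrib : ℕ → ℤ
  | 0 => 3
  | 1 => 0
  | 2 => 2
  | n + 3 => genTrib (n + 2) + genTrib (n + 1) + genTrib n

theorem genTrib_matrix_power (n : ℕ) (hn : 3 ≤ n) :
    (41 : ℤ) • (!![1, 1, 1; 1, 0, 0; 0, 1, 0] : Matrix (Fin 3) (Fin 3) ℤ) ^ n =
      !![10 * genTrib (n + 1) + 16 * genTrib n + 7 * genTrib (n - 1),
         10 * genTrib n + 26 * genTrib (n - 1) + 23 * genTrib (n - 2) + 7 * genTrib (n - 3),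
         10 * genTrib n + 16 * genTrib (n - 1) + 7 * genTrib (n - 2);
         7 * genTrib (n + 1) + 3 * genTrib n + 9 * genTrib (n - 1),
         7 * genTrib n + 10 * genTrib (n - 1) + 12 * genTrib (n - 2) + 9 * genTrib (n - 3),
         7 * genTrib n + 3 * genTrib (n - 1) + 9 * genTrib (n - 2);
         9 * genTrib (n + 1) - 2 * genTrib n - 6 * genTrib (n - 1),
         9 * genTrib n + 7 * genTrib (n - 1) - 8 * genTrib (n - 2) - 6 * genTrib (n - 3),
         9 * genTrib n - 2 * genTrib (n - 1) - 6 * genTrib (n - 2)] := by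
  obtain ⟨m, rfl⟩ : ∃ m, n = m + 3 := ⟨n - 3, by omega⟩
  clear hn
  induction m with
  | zero =>
      show (41 : ℤ) • (!![1, 1, 1; 1, 0, 0; 0, 1, 0] : Matrix (Fin 3) (Fin 3) ℤ) ^ 3 = _
      norm_num [pow_succ, Matrix.mul_fin_three, genTrib, Matrix.smul_of,
        Matrix.smul_cons, Matrix.smul_empty]
  | succ k ih =>
      have : (!![1, 1, 1; 1, 0, 0; 0, 1, 0] : Matrix (Fin 3) (Fin 3) ℤ) ^ (k + 1 + 3)
          = (!![1, 1, 1; 1, 0, 0; 0, 1, 0] : Matrix (Fin 3) (Fin 3) ℤ) ^ (k + 3)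
            * !![1, 1, 1; 1, 0, 0; 0, 1, 0] := by
        rw [← pow_succ]
      rw [this, ← smul_mul_assoc, ih]
      simp only [show k + 1 + 3 - 1 = k + 3 from rfl, show k + 1 + 3 - 2 = k + 2 from rfl,
        show k + 1 + 3 - 3 = k + 1 from rfl, show k + 3 - 1 = k + 2 from rfl,
        show k + 3 - 2 = k + 1 from rfl, show k + 3 - 3 = k from rfl,
        show k + 1 + 3 + 1 = k + 2 + 3 from rfl, show k + 3 + 1 = k + 1 + 3 from rfl,
        show k + 5 = k + 2 + 3 from rfl, show k + 4 = k + 1 + 3 from rfl,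
        genTrib]
      simp [Matrix.mul_fin_three]
      ring_nf
      simp only [and_self]
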